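/- Let z ∈ ℂ³ be a point at which the (real) Fréchet derivative Df(z) : ℂ³ → ℝ³ of the Harvey–Lawson map is surjective. Then for all u, v, w in the kernel of Df(z) one has ω(u, v) = 0 and Im(Ω(u, v, w)) = 0; that is, the fibers of f are special Lagrangian at their regular points. -/

import Mathlib

open Complex

/-- The Harvey–Lawson map `f : ℂ³ → ℝ³`. -/
noncomputable def HarveyLawson (z : Fin 3 → ℂ) : Fin 3 → ℝ :=
  ![(z 0 * z 1 * z 2).im,
    ‖z 0‖ ^ 2 - ‖z 1‖ ^ 2,
    ‖z 0‖ ^ 2 - ‖z 2‖ ^ 2]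

/-- The standard symplectic form on `ℂ³ ≅ ℝ⁶`:
`ω(u,v) = Σⱼ (Re uⱼ · Im vⱼ − Im uⱼ · Re vⱼ)`. -/
def stdSymplectic (u v : Fin 3 → ℂ) : ℝ :=
  ∑ j : Fin 3, ((u j).re * (v j).im - (u j).im * (v j).re)

/-- The standard holomorphic volume form on `ℂ³`:
`Ω(u,v,w)` is the determinant of the complex 3×3 matrix with columns `u, v, w`. -/
def stdHolVol (u v w : Fin 3 → ℂ) : ℂ :=
  Matrix.det !![u 0, v 0, w 0; u 1, v 1, w 1; u 2, v 2, w 2]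

open ComplexConjugate

noncomputable def projR (i : Fin 3) : (Fin 3 → ℂ) →L[ℝ] ℂ :=
  (ContinuousLinearMap.proj i : (Fin 3 → ℂ) →L[ℂ] ℂ).restrictScalars ℝ

@[simp] lemma projR_apply (i : Fin 3) (u : Fin 3 → ℂ) : projR i u = u i := rfl

noncomputable def HLD (z : Fin 3 → ℂ) : (Fin 3 → ℂ) →L[ℝ] (Fin 3 → ℝ) :=
  ContinuousLinearMap.pi
    ![Complex.imCLM.comp ((z 1 * z 2) • projR 0 + (z 0 * z 2) • projR 1 + (z 0 * z 1) • projR 2),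
      Complex.reCLM.comp ((2 * conj (z 0)) • projR 0 - (2 * conj (z 1)) • projR 1),
      Complex.reCLM.comp ((2 * conj (z 0)) • projR 0 - (2 * conj (z 2)) • projR 2)]

lemma HLD_apply (z u : Fin 3 → ℂ) :
    HLD z u = ![(z 1 * z 2 * u 0 + z 0 * z 2 * u 1 + z 0 * z 1 * u 2).im,
      (2 * conj (z 0) * u 0 - 2 * conj (z 1) * u 1).re,
      (2 * conj (z 0) * u 0 - 2 * conj (z 2) * u 2).re] := by
  funext i
  fin_cases i <;>
    simp [HLD, smul_eq_mul]

lemma hasFDerivAt_HL (z : Fin 3 → ℂ) : HasFDerivAt HarveyLawson (HLD z) z := by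
  apply hasFDerivAt_pi''
  intro i
  fin_cases i
  · have h := (((projR 0).hasFDerivAt (x := z)).mul ((projR 1).hasFDerivAt)).mul
      ((projR 2).hasFDerivAt)
    have h' := Complex.imCLM.hasFDerivAt.comp z h
    refine (h'.congr_fderiv ?_)
    ext u
    simp [HLD, HarveyLawson, smul_eq_mul]
    ring
  · have h0 := ((projR 0).hasFDerivAt (x := z)).mul
      ((Complex.conjCLE.toContinuousLinearMap.comp (projR 0)).hasFDerivAt)
    have h1 := ((projR 1).hasFDerivAt (x := z)).mul
      ((Complex.conjCLE.toContinuousLinearMap.comp (projR 1)).hasFDerivAt)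
    have h := Complex.reCLM.hasFDerivAt.comp z (h0.sub h1)
    have e : (fun z : Fin 3 → ℂ => HarveyLawson z 1) =
        fun z => (z 0 * conj (z 0) - z 1 * conj (z 1)).re := by
      funext z
      simp [HarveyLawson, Complex.mul_conj, Complex.sq_norm]
    rw [show (⟨1, by norm_num⟩ : Fin 3) = 1 from rfl, e] at *
    refine h.congr_fderiv ?_
    ext u
    simp [HLD, HarveyLawson, smul_eq_mul, Complex.sub_re, Complex.mul_re]
    ring
  · have h0 := ((projR 0).hasFDerivAt (x := z)).mul
      ((Complex.conjCLE.toContinuousLinearMap.comp (projR 0)).hasFDerivAt)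
    have h1 := ((projR 2).hasFDerivAt (x := z)).mul
      ((Complex.conjCLE.toContinuousLinearMap.comp (projR 2)).hasFDerivAt)
    have h := Complex.reCLM.hasFDerivAt.comp z (h0.sub h1)
    have e : (fun z : Fin 3 → ℂ => HarveyLawson z 2) =
        fun z => (z 0 * conj (z 0) - z 2 * conj (z 2)).re := by
      funext z
      simp [HarveyLawson, Complex.mul_conj, Complex.sq_norm]
    rw [show (⟨2, by norm_num⟩ : Fin 3) = 2 from rfl, e] at *
    refine h.congr_fderiv ?_
    ext u
    simp [HLD, HarveyLawson, smul_eq_mul, Complex.sub_re, Complex.mul_re]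
    ring

noncomputable def Phi (z : Fin 3 → ℂ) : (Fin 3 → ℝ) →ₗ[ℝ] (Fin 3 → ℂ) where
  toFun t := ![(t 0 : ℂ) * (conj (z 1) * conj (z 2)) + (t 1 : ℂ) * (-2*I*z 0) + (t 2 : ℂ) * (-2*I*z 0),
               (t 0 : ℂ) * (conj (z 0) * conj (z 2)) + (t 1 : ℂ) * (2*I*z 1),
               (t 0 : ℂ) * (conj (z 0) * conj (z 1)) + (t 2 : ℂ) * (2*I*z 2)]
  map_add' x y := by
    funext j; fin_cases j <;> simp <;> ring
  map_smul' r x := by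
    funext j; fin_cases j <;> simp [Complex.real_smul] <;> ring

lemma Phi_mem_ker (z : Fin 3 → ℂ) (t : Fin 3 → ℝ) :
    Phi z t ∈ LinearMap.ker (HLD z : (Fin 3 → ℂ) →ₗ[ℝ] Fin 3 → ℝ) := by
  have : HLD z (Phi z t) = 0 := by
    rw [HLD_apply]
    funext j
    fin_cases j <;>
      simp [Phi, Complex.add_im, Complex.mul_im, Complex.mul_re, Complex.add_re,
        Complex.sub_re, Complex.sub_im] <;> ring
  exact this

lemma Phi_injective (z : Fin 3 → ℂ) (hz : Function.Surjective (HLD z)) :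
    Function.Injective (Phi z) := by
  rw [← LinearMap.ker_eq_bot, LinearMap.ker_eq_bot']
  intro t ht
  obtain ⟨u, hu⟩ := hz t
  have key : t 0 * HLD z u 0 + t 1 * HLD z u 1 + t 2 * HLD z u 2 =
      (conj (Phi z t 0) * u 0 + conj (Phi z t 1) * u 1 + conj (Phi z t 2) * u 2).im := by
    rw [HLD_apply]
    simp [Phi, Complex.add_im, Complex.mul_im, Complex.mul_re, Complex.add_re,
      Complex.sub_re, Complex.sub_im]
    ring
  have h0 : Phi z t 0 = 0 := by rw [ht]; rfl
  have h1 : Phi z t 1 = 0 := by rw [ht]; rfl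
  have h2 : Phi z t 2 = 0 := by rw [ht]; rfl
  rw [h0, h1, h2, hu] at key
  simp at key
  funext j
  fin_cases j <;> simp <;> nlinarith [key, sq_nonneg (t 0), sq_nonneg (t 1), sq_nonneg (t 2)]

lemma range_Phi_eq_ker (z : Fin 3 → ℂ) (hz : Function.Surjective (HLD z)) :
    LinearMap.range (Phi z) = LinearMap.ker (HLD z : (Fin 3 → ℂ) →ₗ[ℝ] Fin 3 → ℝ) := by
  have hle : LinearMap.range (Phi z) ≤ LinearMap.ker (HLD z : (Fin 3 → ℂ) →ₗ[ℝ] Fin 3 → ℝ) := by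
    rintro x ⟨t, rfl⟩
    exact Phi_mem_ker z t
  have hD : LinearMap.range ((HLD z) : (Fin 3 → ℂ) →ₗ[ℝ] (Fin 3 → ℝ)) = ⊤ :=
    LinearMap.range_eq_top.mpr hz
  have hdim : Module.finrank ℝ (Fin 3 → ℂ) = 6 := by
    rw [Module.finrank_pi_fintype]
    simp [Complex.finrank_real_complex]
  have hrn := LinearMap.finrank_range_add_finrank_ker ((HLD z) : (Fin 3 → ℂ) →ₗ[ℝ] (Fin 3 → ℝ))
  rw [hD, hdim] at hrn
  have htop : Module.finrank ℝ (⊤ : Submodule ℝ (Fin 3 → ℝ)) = 3 := by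
    rw [finrank_top]; simp [Module.finrank_pi]
  rw [htop] at hrn
  have hker3 : Module.finrank ℝ (LinearMap.ker ((HLD z) : (Fin 3 → ℂ) →ₗ[ℝ] (Fin 3 → ℝ))) = 3 := by
    omega
  have hrange3 : Module.finrank ℝ (LinearMap.range (Phi z)) = 3 := by
    rw [LinearMap.finrank_range_of_inj (Phi_injective z hz)]
    simp [Module.finrank_pi]
  refine Submodule.eq_of_le_of_finrank_le hle ?_
  rw [hrange3]
  exact le_of_eq hker3

/-- At every regular point `z` of the Harvey–Lawson map (i.e. a point where the real
Fréchet derivative `Df(z) : ℂ³ → ℝ³` is surjective), the tangent space of the fiber,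
namely `ker Df(z)`, is special Lagrangian: `ω` vanishes on it and `Im Ω` vanishes on it. -/
theorem harveyLawson_fibers_special_lagrangian
    (z : Fin 3 → ℂ) (hz : Function.Surjective (fderiv ℝ HarveyLawson z)) :
    ∀ u v w : Fin 3 → ℂ,
      u ∈ LinearMap.ker ((fderiv ℝ HarveyLawson z : (Fin 3 → ℂ) →ₗ[ℝ] Fin 3 → ℝ)) →
      v ∈ LinearMap.ker ((fderiv ℝ HarveyLawson z : (Fin 3 → ℂ) →ₗ[ℝ] Fin 3 → ℝ)) →
      w ∈ LinearMap.ker ((fderiv ℝ HarveyLawson z : (Fin 3 → ℂ) →ₗ[ℝ] Fin 3 → ℝ)) →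
      stdSymplectic u v = 0 ∧ (stdHolVol u v w).im = 0 := by
  have hfd : fderiv ℝ HarveyLawson z = HLD z := (hasFDerivAt_HL z).fderiv
  rw [hfd] at hz ⊢
  intro u v w hu hv hw
  rw [← range_Phi_eq_ker z hz] at hu hv hw
  obtain ⟨t, rfl⟩ := hu
  obtain ⟨s, rfl⟩ := hv
  obtain ⟨r, rfl⟩ := hw
  constructor
  · simp [stdSymplectic, Phi, Fin.sum_univ_three, Complex.add_re, Complex.add_im,
      Complex.mul_re, Complex.mul_im]
    ring
  · simp [stdHolVol, Phi, Matrix.det_fin_three, Complex.add_re, Complex.add_im,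
      Complex.mul_re, Complex.mul_im]
    ring
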